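/- Weak backward round tripping of lenses is compositional: it is preserved by return, bind, and comap. Specifically: (1) return y is weak backward round tripping; (2) if l and every k v are weak backward round tripping then so is l >>= k; (3) if l is weak backward round tripping then so is comap f l. -/

import Mathlib

/-- A (monadic-profunctor) lens with source `s`, pre-view `u`, view `v`. -/
structure Lens (s u v : Type) where
  get : s → Option v
  put : u → s → Option ((v × s) × (s → Prop))

def Lens.ret {s u v : Type} (x : v) : Lens s u v :=
  ⟨fun _ => some x, fun _ st => some ((x, st), fun _ => True)⟩

def Lens.bind {s u v w : Type} (l : Lens s u v) (k : v → Lens s u w) : Lens s u w :=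
  ⟨fun st => (l.get st).bind (fun v => (k v).get st),
   fun x st => (l.put x st).bind (fun r =>
     ((k r.1.1).put x r.1.2).map (fun r2 =>
       ((r2.1.1, r2.1.2), fun t => r.2 t ∧ r2.2 t)))⟩

def Lens.comap {s u u' v : Type} (f : u → Option u') (l : Lens s u' v) : Lens s u v :=
  ⟨l.get, fun x st => (f x).bind (fun x' => l.put x' st)⟩

/-- Weak backward round tripping for lenses. -/
def LWeakBackward {s u v : Type} (l : Lens s u v) : Prop :=
  ∀ (x : u) (y : v) (st s0 s' : s) (p : s → Prop),
    l.put x st = some ((y, s0), p) → p s' → l.get s' = some y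

theorem lens_weakBackward_compositional (s u u' v w : Type) :
    (∀ y : v, LWeakBackward (Lens.ret (s := s) (u := u) y)) ∧
    (∀ (l : Lens s u v) (k : v → Lens s u w),
      LWeakBackward l → (∀ y : v, LWeakBackward (k y)) →
      LWeakBackward (Lens.bind l k)) ∧
    (∀ (f : u → Option u') (l : Lens s u' v),
      LWeakBackward l → LWeakBackward (Lens.comap f l)) := by
  refine ⟨?_, ?_, ?_⟩
  · intro y x y' st s0 s' p h hp
    simp only [Lens.ret, Option.some.injEq, Prod.mk.injEq] at h
    simp [Lens.ret, h.1.1]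
  · intro l k hl hk x y st s0 s' p h hp
    simp only [Lens.bind, Option.bind_eq_some_iff, Option.map_eq_some_iff] at h
    obtain ⟨⟨⟨v1, s1⟩, p1⟩, h1, ⟨⟨w2, s2⟩, p2⟩, h2, heq⟩ := h
    injection heq with h3 h4
    injection h3 with h5 h6
    subst h4 h5 h6
    obtain ⟨hp1, hp2⟩ := hp
    have g1 := hl x v1 st s1 s' p1 h1 hp1
    have g2 := hk v1 x w2 s1 s2 s' p2 h2 hp2
    simp [Lens.bind, g1, g2]
  · intro f l hl x y st s0 s' p h hp
    simp only [Lens.comap, Option.bind_eq_some_iff] at h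
    obtain ⟨x', hx', h'⟩ := h
    exact hl x' y st s0 s' p h' hp
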